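/- Characterization of PIIF under a proto-metric: let d be a proto-metric on D. A probabilistic allocation π is PIIF with respect to total variation distance and d (i.e., for every ordered pair of doctors (i,j) there exists a distribution p on H with D_TV(p, π(j)) ≤ d(i,j) and π(i) ⪰_i p) if and only if for every two doctors i, j with d(i,j) = 0, the prospect of i stochastically dominates the prospect of j with respect to ≻_i. -/
import Mathlib


open Finset

/-- A probabilistic allocation: a finitely supported probability distribution over
matchings (bijections between doctors `D` and hospitals `H`). -/
def IsAlloc {D H : Type*} [Fintype D] [Fintype H] [DecidableEq D] [DecidableEq H]
    (π : (D ≃ H) → ℝ) : Prop :=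
  (∀ m, 0 ≤ π m) ∧ (∑ m : D ≃ H, π m) = 1

/-- The prospect of doctor `i` under the allocation `π`: the probability that `i`
is matched to hospital `h`. -/
def prospect {D H : Type*} [Fintype D] [Fintype H] [DecidableEq D] [DecidableEq H]
    (π : (D ≃ H) → ℝ) (i : D) (h : H) : ℝ :=
  ∑ m : D ≃ H, if m i = h then π m else 0

/-- `p` is a probability distribution on `H`. -/
def IsDist {H : Type*} [Fintype H] (p : H → ℝ) : Prop :=
  (∀ h, 0 ≤ p h) ∧ (∑ h : H, p h) = 1

/-- Total variation distance between two distributions on `H`. -/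
noncomputable def TV {H : Type*} [Fintype H] (p q : H → ℝ) : ℝ :=
  (1 / 2) * ∑ h : H, |p h - q h|

/-- `p` stochastically dominates `q` with respect to the strict preference relation
`pref` (where `pref x y` means `x` is strictly preferred to `y`): for every `h`, the
probability of an outcome at least as good as `h` under `p` is at least that under `q`. -/
def SDom {H : Type*} [Fintype H] (pref : H → H → Prop) (p q : H → ℝ) : Prop :=
  ∀ h : H,
    (∑ h' : H, Set.indicator {x : H | pref x h ∨ x = h} q h') ≤
      ∑ h' : H, Set.indicator {x : H | pref x h ∨ x = h} p h'

/-- Preference-informed individual fairness with respect to a (pseudo)metric `d`,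
total variation distance, and the doctors' strict preferences `pref`. -/
def PIIF {D H : Type*} [Fintype D] [Fintype H] [DecidableEq D] [DecidableEq H]
    (d : D → D → ℝ) (pref : D → H → H → Prop) (π : (D ≃ H) → ℝ) : Prop :=
  ∀ i j : D, ∃ p : H → ℝ,
    IsDist p ∧ TV p (prospect π j) ≤ d i j ∧ SDom (pref i) (prospect π i) p

/-- PIIF with respect to the proto-metric induced by the cluster map `c`: the prospect
of every doctor stochastically dominates the prospect of every doctor in its cluster. -/
def ClusterPIIF {D H K : Type*} [Fintype D] [Fintype H] [DecidableEq D] [DecidableEq H]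
    (c : D → K) (pref : D → H → H → Prop) (π : (D ≃ H) → ℝ) : Prop :=
  ∀ i j : D, c i = c j → SDom (pref i) (prospect π i) (prospect π j)

/-- Characterization of PIIF under a proto-metric: an allocation `π`
is PIIF with respect to total variation distance and the 0/1 proto-metric induced by
the cluster map `c` if and only if for every two doctors `i, j` in the same cluster,
the prospect of `i` stochastically dominates the prospect of `j` with respect to `i`'s
preferences. -/
lemma prospect_isDist {D H : Type*} [Fintype D] [Fintype H] [DecidableEq D] [DecidableEq H]
    (π : (D ≃ H) → ℝ) (hπ : IsAlloc π) (i : D) : IsDist (prospect π i) := by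
  constructor
  · intro h
    exact Finset.sum_nonneg fun m _ => by split <;> simp [hπ.1 m]
  · unfold prospect
    rw [Finset.sum_comm]
    simpa using hπ.2

theorem piif_iff_cluster_stochastic_domination
    {D H K : Type*} [Fintype D] [Fintype H] [DecidableEq D] [DecidableEq H]
    [DecidableEq K]
    (c : D → K)
    (dpref : D → H → H → Prop) (hdpref : ∀ i, IsStrictTotalOrder H (dpref i))
    (π : (D ≃ H) → ℝ) (hπ : IsAlloc π) :
    PIIF (fun i j => if c i = c j then (0 : ℝ) else 1) dpref π ↔
      (∀ i j : D, c i = c j → SDom (dpref i) (prospect π i) (prospect π j)) := by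
  constructor
  · intro hP i j hc
    obtain ⟨p, hp, htv, hsd⟩ := hP i j
    simp only [hc, if_true] at htv
    have hsum : ∑ h : H, |p h - prospect π j h| = 0 := by
      have h2 : (0:ℝ) ≤ ∑ h : H, |p h - prospect π j h| :=
        Finset.sum_nonneg fun h _ => abs_nonneg _
      unfold TV at htv; linarith
    have hpq : ∀ h : H, p h = prospect π j h := by
      intro h
      have := (Finset.sum_eq_zero_iff_of_nonneg (fun h _ => abs_nonneg _)).mp hsum h
        (Finset.mem_univ h)
      have := abs_eq_zero.mp this
      linarith
    have : p = prospect π j := funext hpq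
    rwa [this] at hsd
  · intro hC i j
    by_cases hc : c i = c j
    · refine ⟨prospect π j, prospect_isDist π hπ j, ?_, hC i j hc⟩
      simp [TV, hc]
    · refine ⟨prospect π i, prospect_isDist π hπ i, ?_, fun h => le_refl _⟩
      simp only [hc, if_false]
      have hi := prospect_isDist π hπ i
      have hj := prospect_isDist π hπ j
      have hb : ∑ h : H, |prospect π i h - prospect π j h| ≤ 2 := by
        calc ∑ h : H, |prospect π i h - prospect π j h|
            ≤ ∑ h : H, (prospect π i h + prospect π j h) := by
              refine Finset.sum_le_sum fun h _ => ?_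
              rw [abs_sub_le_iff]
              constructor <;> nlinarith [hi.1 h, hj.1 h]
          _ = 2 := by rw [Finset.sum_add_distrib, hi.2, hj.2]; norm_num
      unfold TV; linarith
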